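/- arXiv:2107.05525 — 2 statements merged into one kernel-verified Lean document; each statement's English description precedes it below -/
import Mathlib

section
/- The Dirichlet series identity: for real s > 1, ∏_{p ≡ 1 (mod 4)} ((p^s + 1)/(p^s - 1)) = L(s, χ₄) · ζ(s) / ζ(2s) · (1 + 2^{-s})^{-1}, where the product is over primes p ≡ 1 (mod 4). -/
def chi4 (n : ℕ) : ℤ := if n % 4 = 1 then 1 else if n % 4 = 3 then -1 else 0

lemma chi4_mul (m n : ℕ) : chi4 (m * n) = chi4 m * chi4 n := by
  unfold chi4
  have hm : m % 4 < 4 := Nat.mod_lt _ (by norm_num)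
  have hn : n % 4 < 4 := Nat.mod_lt _ (by norm_num)
  rw [Nat.mul_mod]
  interval_cases h1 : (m % 4) <;> interval_cases h2 : (n % 4) <;> norm_num

lemma abs_chi4_le (n : ℕ) : |(chi4 n : ℝ)| ≤ 1 := by
  unfold chi4; split_ifs <;> norm_num

/-- `n ↦ n^(-s)` as a `MonoidWithZeroHom`. -/
noncomputable def rpowHom (s : ℝ) (hs : 0 < s) : ℕ →*₀ ℝ where
  toFun n := (n : ℝ) ^ (-s)
  map_zero' := by
    show ((0:ℕ) : ℝ) ^ (-s) = 0
    rw [Nat.cast_zero, Real.zero_rpow (by linarith)]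
  map_one' := by simp
  map_mul' m n := by
    push_cast
    exact Real.mul_rpow (Nat.cast_nonneg m) (Nat.cast_nonneg n)

/-- `n ↦ χ₄(n) n^(-s)` as a `MonoidWithZeroHom`. -/
noncomputable def chiHom (s : ℝ) (hs : 0 < s) : ℕ →*₀ ℝ where
  toFun n := (chi4 n : ℝ) * (n : ℝ) ^ (-s)
  map_zero' := by
    show (chi4 0 : ℝ) * ((0:ℕ) : ℝ) ^ (-s) = 0
    rw [Nat.cast_zero, Real.zero_rpow (by linarith)]; ring
  map_one' := by simp [chi4]
  map_mul' m n := by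
    show (chi4 (m*n) : ℝ) * ((m*n : ℕ) : ℝ) ^ (-s) = _
    rw [chi4_mul]
    push_cast
    rw [Real.mul_rpow (Nat.cast_nonneg m) (Nat.cast_nonneg n)]
    ring

lemma summable_rpow_neg {s : ℝ} (hs : 1 < s) :
    Summable (fun n : ℕ ↦ ‖(n : ℝ) ^ (-s)‖) := by
  have : Summable (fun n : ℕ ↦ (n : ℝ) ^ (-s)) :=
    Real.summable_nat_rpow.mpr (by linarith)
  refine this.congr fun n ↦ ?_
  exact (Real.norm_of_nonneg (Real.rpow_nonneg (Nat.cast_nonneg n) _)).symm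

example (s : ℝ) (hs : 1 < s) : True := trivial

open ArithmeticFunction ArithmeticFunction.Moebius in
lemma mu_facts {s : ℝ} (hs : 1 < s) :
    HasProd (fun p : Nat.Primes ↦ 1 - ((p : ℕ) : ℝ) ^ (-(2*s)))
      (∑' n : ℕ, (μ n : ℝ) * (n : ℝ) ^ (-(2*s))) := by
  have h2s : 1 < 2*s := by linarith
  set f : ℕ → ℝ := fun n ↦ (μ n : ℝ) * (n : ℝ) ^ (-(2*s)) with hf
  have hf1 : f 1 = 1 := by simp [hf]
  have hmul : ∀ {m n : ℕ}, Nat.Coprime m n → f (m * n) = f m * f n := by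
    intro m n hc
    simp only [hf]
    rw [isMultiplicative_moebius.map_mul_of_coprime hc]
    push_cast
    rw [Real.mul_rpow (Nat.cast_nonneg m) (Nat.cast_nonneg n)]
    ring
  have hsum : Summable (fun n ↦ ‖f n‖) := by
    refine Summable.of_nonneg_of_le (fun n ↦ norm_nonneg _) (fun n ↦ ?_)
      ((summable_rpow_neg h2s))
    have h1 : ‖(μ n : ℝ)‖ ≤ 1 := by
      rw [Real.norm_eq_abs, ← Int.cast_abs]
      exact_mod_cast abs_moebius_le_one
    simp only [hf, norm_mul]
    calc ‖(μ n : ℝ)‖ * ‖(n:ℝ)^(-(2*s))‖ ≤ 1 * ‖(n:ℝ)^(-(2*s))‖ :=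
          mul_le_mul_of_nonneg_right h1 (norm_nonneg _)
    _ = ‖(n:ℝ)^(-(2*s))‖ := one_mul _
  have hf0 : f 0 = 0 := by
    simp [hf, Real.zero_rpow (show -(2*s) ≠ 0 by intro h; nlinarith)]
  have key := EulerProduct.eulerProduct_hasProd hf1 hmul hsum hf0
  refine HasProd.congr_fun key fun p ↦ ?_
  obtain ⟨p, hp⟩ := p
  have : ∑' e : ℕ, f (p ^ e) = ∑ e ∈ ({0, 1} : Finset ℕ), f (p ^ e) := by
    refine tsum_eq_sum fun e he ↦ ?_
    simp only [Finset.mem_insert, Finset.mem_singleton, not_or] at he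
    have : μ (p ^ e) = 0 := by
      rw [moebius_apply_prime_pow hp he.1, if_neg he.2]
    simp [hf, this]
  rw [this, Finset.sum_pair (by norm_num : (0:ℕ) ≠ 1)]
  simp only [hf, pow_zero, pow_one, moebius_apply_one, moebius_apply_prime hp,
    Nat.cast_one, Real.one_rpow, Int.cast_one, Int.cast_neg]
  ring

set_option maxHeartbeats 2000000 in
/-- For real `s > 1`,
`∏_{p ≡ 1 (4)} (p^s+1)/(p^s-1) = L(s,χ₄) ζ(s) / ζ(2s) · (1 + 2^{-s})⁻¹`. -/
theorem euler_product_identity (s : ℝ) (hs : 1 < s) :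
    (∏' p : {p : ℕ // p.Prime ∧ p % 4 = 1}, (((p : ℕ) : ℝ) ^ s + 1) / (((p : ℕ) : ℝ) ^ s - 1)) =
      (∑' n : ℕ, (chi4 n : ℝ) / (n : ℝ) ^ s) * (∑' n : ℕ, 1 / (n : ℝ) ^ s) /
        (∑' n : ℕ, 1 / (n : ℝ) ^ (2 * s)) * (1 + (2 : ℝ) ^ (-s))⁻¹ := by
  classical
  have hs0 : 0 < s := by linarith
  have h2s : (1:ℝ) < 2*s := by linarith
  have h2s0 : (0:ℝ) < 2*s := by linarith
  set Z1 : ℝ := ∑' n : ℕ, (n : ℝ) ^ (-s) with hZ1def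
  set Z2 : ℝ := ∑' n : ℕ, (n : ℝ) ^ (-(2*s)) with hZ2def
  set L : ℝ := ∑' n : ℕ, (chi4 n : ℝ) * (n : ℝ) ^ (-s) with hLdef
  set M : ℝ := ∑' n : ℕ, (ArithmeticFunction.moebius n : ℝ) * (n : ℝ) ^ (-(2*s)) with hMdef
  have hZ1 : HasProd (fun p : Nat.Primes ↦ (1 - ((p:ℕ):ℝ)^(-s))⁻¹) Z1 :=
    EulerProduct.eulerProduct_completely_multiplicative_hasProd
      (f := rpowHom s hs0) (summable_rpow_neg hs)
  have hZ2 : HasProd (fun p : Nat.Primes ↦ (1 - ((p:ℕ):ℝ)^(-(2*s)))⁻¹) Z2 :=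
    EulerProduct.eulerProduct_completely_multiplicative_hasProd
      (f := rpowHom (2*s) h2s0) (summable_rpow_neg h2s)
  have hLsum : Summable (fun n ↦ ‖(chiHom s hs0) n‖) := by
    refine Summable.of_nonneg_of_le (fun n ↦ norm_nonneg _) (fun n ↦ ?_)
      (summable_rpow_neg hs)
    show ‖(chi4 n : ℝ) * (n:ℝ)^(-s)‖ ≤ ‖(n:ℝ)^(-s)‖
    rw [norm_mul]
    calc ‖(chi4 n : ℝ)‖ * ‖(n:ℝ)^(-s)‖ ≤ 1 * ‖(n:ℝ)^(-s)‖ :=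
          mul_le_mul_of_nonneg_right (by rw [Real.norm_eq_abs]; exact abs_chi4_le n)
            (norm_nonneg _)
    _ = ‖(n:ℝ)^(-s)‖ := one_mul _
  have hL : HasProd (fun p : Nat.Primes ↦ (1 - (chi4 p : ℝ) * ((p:ℕ):ℝ)^(-s))⁻¹) L :=
    EulerProduct.eulerProduct_completely_multiplicative_hasProd (f := chiHom s hs0) hLsum
  have hM : HasProd (fun p : Nat.Primes ↦ 1 - ((p:ℕ):ℝ)^(-(2*s))) M := mu_facts hs
  -- facts about primes
  have hpt : ∀ p : Nat.Primes, 1 < ((p:ℕ):ℝ) := fun p ↦ by exact_mod_cast p.2.one_lt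
  have hx2 : ∀ p : Nat.Primes, ((p:ℕ):ℝ)^(-(2*s)) < 1 := fun p ↦
    Real.rpow_lt_one_of_one_lt_of_neg (hpt p) (by linarith)
  -- M * Z2 = 1
  have hMZ2 : M * Z2 = 1 := by
    have h := hM.mul hZ2
    have h' : HasProd (fun _ : Nat.Primes ↦ (1:ℝ)) (M * Z2) := by
      refine h.congr_fun fun p ↦ ?_
      exact (mul_inv_cancel₀ (by nlinarith [hx2 p])).symm
    exact (h'.unique hasProd_one)
  have hZ2ne : Z2 ≠ 0 := fun h ↦ by simp [h] at hMZ2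
  -- the big product
  have hBig := (hL.mul hZ1).mul hM
  have hK : HasProd (fun p : Nat.Primes ↦
      if p = (⟨2, Nat.prime_two⟩ : Nat.Primes) then (1 + (2:ℝ)^(-s))⁻¹ else 1)
      ((1 + (2:ℝ)^(-s))⁻¹) := hasProd_ite_eq _ _
  have hBig2 := hBig.mul hK
  set H' : Nat.Primes → ℝ := fun p ↦
    if (p:ℕ) % 4 = 1 then (((p:ℕ):ℝ)^s + 1)/(((p:ℕ):ℝ)^s - 1) else 1 with hH'def
  have hfun : ∀ p : Nat.Primes,
      H' p = ((1 - (chi4 p : ℝ) * ((p:ℕ):ℝ)^(-s))⁻¹ * (1 - ((p:ℕ):ℝ)^(-s))⁻¹ *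
        (1 - ((p:ℕ):ℝ)^(-(2*s)))) *
        (if p = (⟨2, Nat.prime_two⟩ : Nat.Primes) then (1 + (2:ℝ)^(-s))⁻¹ else 1) := by
    intro p
    obtain ⟨q, hq⟩ := p
    have hq0 : (0:ℝ) < (q:ℝ) := by exact_mod_cast hq.pos
    have hq1 : 1 < ((q:ℕ):ℝ) := by exact_mod_cast hq.one_lt
    set t : ℝ := (q:ℝ)^s with htdef
    have ht : 1 < t := Real.one_lt_rpow_iff_of_pos hq0 |>.mpr (Or.inl ⟨hq1, hs0⟩)
    have ht0 : t ≠ 0 := by linarith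
    have htm : t - 1 ≠ 0 := by linarith
    have htp : t + 1 ≠ 0 := by linarith
    have hneg : (q:ℝ)^(-s) = t⁻¹ := by rw [Real.rpow_neg hq0.le]
    have hneg2 : (q:ℝ)^(-(2*s)) = (t^2)⁻¹ := by
      rw [Real.rpow_neg hq0.le, mul_comm, Real.rpow_mul hq0.le]
      norm_num [htdef]
    by_cases h1 : q % 4 = 1
    · have hchi : (chi4 q : ℝ) = 1 := by simp [chi4, h1]
      have hne : (⟨q, hq⟩ : Nat.Primes) ≠ ⟨2, Nat.prime_two⟩ := by
        intro h
        rw [Subtype.mk_eq_mk] at h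
        omega
      simp only [hH'def, if_pos h1, hchi, hneg, hneg2, mul_one, one_mul]
      split_ifs with hh
      · exact absurd hh hne
      rw [← htdef]
      field_simp
      ring
    · by_cases h2 : q = 2
      · subst h2
        have heq : (⟨2, hq⟩ : Nat.Primes) = ⟨2, Nat.prime_two⟩ := rfl
        have hchi : (chi4 2 : ℝ) = 0 := by simp [chi4]
        have hcast : ((2:ℕ):ℝ) = (2:ℝ) := by norm_num
        simp only [hH'def, if_neg (by norm_num : ¬(2 % 4 = 1)), hchi, zero_mul,
          sub_zero, inv_one, one_mul]
        split_ifs with hh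
        swap
        · exact absurd heq hh
        rw [hcast] at hneg hneg2
        rw [hcast, hneg, hneg2]
        field_simp
        ring
      · have hodd : Odd q := hq.odd_of_ne_two h2
        have hmod2 : q % 2 = 1 := Nat.odd_iff.mp hodd
        have hd : q % 4 % 2 = q % 2 := Nat.mod_mod_of_dvd q (by norm_num)
        have h3 : q % 4 = 3 := by omega
        have hchi : (chi4 q : ℝ) = -1 := by simp [chi4, h3]
        have hne : (⟨q, hq⟩ : Nat.Primes) ≠ ⟨2, Nat.prime_two⟩ := by
          intro h
          rw [Subtype.mk_eq_mk] at h
          exact h2 h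
        simp only [hH'def, if_neg (by omega : ¬(q % 4 = 1)), hchi, hneg, hneg2,
          mul_one]
        split_ifs with hh
        · exact absurd hh hne
        have htp' : 1 + t ≠ 0 := by linarith
        field_simp
        ring_nf
        rw [show t ^ 2 * (1 + t)⁻¹ - (1 + t)⁻¹ = (t ^ 2 - 1) / (1 + t) by ring, eq_div_iff htp']
        ring
  have hH'prod : HasProd H' (L * Z1 * M * (1 + (2:ℝ)^(-s))⁻¹) := hBig2.congr_fun hfun
  have hsupp : Function.mulSupport H' ⊆ {p : Nat.Primes | (p:ℕ) % 4 = 1} := by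
    intro p hp
    by_contra h
    exact hp (if_neg h)
  have hsub : HasProd ((H' ∘ (↑)) : {p : Nat.Primes | (p:ℕ) % 4 = 1} → ℝ)
      (L * Z1 * M * (1 + (2:ℝ)^(-s))⁻¹) :=
    (hasProd_subtype_iff_of_mulSupport_subset hsupp).mpr hH'prod
  let e : {p : ℕ // p.Prime ∧ p % 4 = 1} ≃ {p : Nat.Primes | (p:ℕ) % 4 = 1} :=
    { toFun := fun x ↦ ⟨⟨x.1, x.2.1⟩, x.2.2⟩
      invFun := fun y ↦ ⟨y.1.1, y.1.2, y.2⟩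
      left_inv := fun _ ↦ rfl
      right_inv := fun _ ↦ rfl }
  have hfinal : HasProd
      (fun p : {p : ℕ // p.Prime ∧ p % 4 = 1} ↦ (((p:ℕ):ℝ)^s + 1)/(((p:ℕ):ℝ)^s - 1))
      (L * Z1 * M * (1 + (2:ℝ)^(-s))⁻¹) := by
    have h : HasProd (fun x : {p : ℕ // p.Prime ∧ p % 4 = 1} ↦ H' ⟨x.1, x.2.1⟩)
        (L * Z1 * M * (1 + (2:ℝ)^(-s))⁻¹) := (Equiv.hasProd_iff e).mpr hsub
    refine h.congr_fun fun x ↦ ?_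
    rw [hH'def]
    exact (if_pos x.2.2).symm
  rw [hfinal.tprod_eq]
  have e1 : (∑' n : ℕ, (chi4 n : ℝ) / (n:ℝ)^s) = L := tsum_congr fun n ↦ by
    rw [div_eq_mul_inv, ← Real.rpow_neg (Nat.cast_nonneg n)]
  have e2 : (∑' n : ℕ, 1 / (n:ℝ)^s) = Z1 := tsum_congr fun n ↦ by
    rw [one_div, ← Real.rpow_neg (Nat.cast_nonneg n)]
  have e3 : (∑' n : ℕ, 1 / (n:ℝ)^(2*s)) = Z2 := tsum_congr fun n ↦ by
    rw [one_div, ← Real.rpow_neg (Nat.cast_nonneg n)]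
  rw [e1, e2, e3]
  have hMval : M = Z2⁻¹ := eq_inv_of_mul_eq_one_left hMZ2
  rw [div_eq_mul_inv, ← hMval]
end

section
/- The Dirichlet convolution identity at s = 2: ∏_{p ≡ 1 (mod 4)} ((p² + 1)/(p² - 1)) = 12G/π², where G is the Catalan constant and the product runs over primes p ≡ 1 (mod 4). -/
open Real

/-- The Catalan constant `G = ∑_{k ≥ 0} (-1)^k/(2k+1)²`. -/
noncomputable def catalan' : ℝ := ∑' k : ℕ, (-1 : ℝ) ^ k / (2 * k + 1) ^ 2

namespace CatalanAux

/-- `χ₄` as a real-valued `MonoidWithZeroHom` on `ℕ`. -/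
noncomputable def chi : ℕ →*₀ ℝ where
  toFun n := ((ZMod.χ₄ (n : ZMod 4) : ℤ) : ℝ)
  map_zero' := by
    have := ZMod.χ₄_nat_eq_if_mod_four 0
    simp_all
  map_one' := by
    have := ZMod.χ₄_nat_eq_if_mod_four 1
    simp_all
  map_mul' m n := by
    push_cast [map_mul]
    ring

@[simp] lemma chi_apply (n : ℕ) :
    chi n = if n % 2 = 0 then 0 else if n % 4 = 1 then 1 else -1 := by
  show ((ZMod.χ₄ (n : ZMod 4) : ℤ) : ℝ) = _
  rw [ZMod.χ₄_nat_eq_if_mod_four]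
  split_ifs <;> simp

/-- `n ↦ n⁻²` as a `MonoidWithZeroHom`. -/
noncomputable def z2 : ℕ →*₀ ℝ where
  toFun n := ((n : ℝ) ^ 2)⁻¹
  map_zero' := by norm_num
  map_one' := by norm_num
  map_mul' m n := by push_cast; rw [mul_pow, mul_inv]

@[simp] lemma z2_apply (n : ℕ) : z2 n = ((n : ℝ) ^ 2)⁻¹ := rfl

/-- `n ↦ n⁻⁴` as a `MonoidWithZeroHom`. -/
noncomputable def z4 : ℕ →*₀ ℝ where
  toFun n := ((n : ℝ) ^ 4)⁻¹
  map_zero' := by norm_num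
  map_one' := by norm_num
  map_mul' m n := by push_cast; rw [mul_pow, mul_inv]

@[simp] lemma z4_apply (n : ℕ) : z4 n = ((n : ℝ) ^ 4)⁻¹ := rfl

/-- `n ↦ χ₄(n) n⁻²` as a `MonoidWithZeroHom`. -/
noncomputable def chiz : ℕ →*₀ ℝ where
  toFun n := chi n * ((n : ℝ) ^ 2)⁻¹
  map_zero' := by norm_num
  map_one' := by norm_num
  map_mul' m n := by
    push_cast [map_mul]
    rw [mul_pow, mul_inv]
    ring

@[simp] lemma chiz_apply (n : ℕ) : chiz n = chi n * ((n : ℝ) ^ 2)⁻¹ := rfl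

lemma summable_z2 : Summable fun n : ℕ => ((n : ℝ) ^ 2)⁻¹ :=
  Real.summable_nat_pow_inv.mpr one_lt_two

lemma summable_z4 : Summable fun n : ℕ => ((n : ℝ) ^ 4)⁻¹ :=
  Real.summable_nat_pow_inv.mpr (by norm_num)

lemma summable_norm_z2 : Summable (‖z2 ·‖) := by
  refine summable_z2.congr fun n => ?_
  simp [Real.norm_of_nonneg, inv_nonneg, sq_nonneg]

lemma summable_norm_z4 : Summable (‖z4 ·‖) := by
  refine summable_z4.congr fun n => ?_
  simp [Real.norm_of_nonneg, inv_nonneg]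

lemma abs_chi_le_one (n : ℕ) : |chi n| ≤ 1 := by
  rw [chi_apply]
  split_ifs <;> norm_num

lemma summable_norm_chiz : Summable (‖chiz ·‖) := by
  refine Summable.of_nonneg_of_le (fun n => norm_nonneg _) (fun n => ?_) summable_z2
  rw [chiz_apply, Real.norm_eq_abs, abs_mul]
  calc |chi n| * |((n : ℝ) ^ 2)⁻¹| ≤ 1 * |((n : ℝ) ^ 2)⁻¹| := by
        gcongr; exact abs_chi_le_one n
    _ = ((n : ℝ) ^ 2)⁻¹ := by
        rw [one_mul, abs_of_nonneg (by positivity)]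

lemma tsum_z2 : (∑' n : ℕ, z2 n) = π ^ 2 / 6 := by
  simp only [z2_apply]
  simpa [one_div] using hasSum_zeta_two.tsum_eq

lemma tsum_z4 : (∑' n : ℕ, z4 n) = π ^ 4 / 90 := by
  simp only [z4_apply]
  simpa [one_div] using hasSum_zeta_four.tsum_eq

lemma chi_two_mul_add_one (k : ℕ) : chi (2 * k + 1) = (-1 : ℝ) ^ k := by
  rw [chi_apply]
  rcases Nat.even_or_odd k with ⟨m, rfl⟩ | ⟨m, rfl⟩
  · have h1 : (2 * (m + m) + 1) % 2 = 1 := by omega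
    have h2 : (2 * (m + m) + 1) % 4 = 1 := by omega
    rw [if_neg (by omega), if_pos h2]
    rw [show m + m = 2 * m by ring, pow_mul]
    norm_num
  · have h2 : (2 * (2 * m + 1) + 1) % 4 = 3 := by omega
    rw [if_neg (by omega), if_neg (by omega)]
    rw [pow_add, pow_mul]
    norm_num

lemma tsum_chiz : (∑' n : ℕ, chiz n) = catalan' := by
  simp only [chiz_apply]
  rw [catalan']
  have hinj : Function.Injective fun k : ℕ => 2 * k + 1 := by
    intro a b h
    dsimp only at h
    omega
  have := hinj.tsum_eq (f := fun n : ℕ => chi n * ((n : ℝ) ^ 2)⁻¹) ?_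
  · rw [← this]
    refine tsum_congr fun k => ?_
    rw [chi_two_mul_add_one, div_eq_mul_inv]
    push_cast
    try ring
  · intro n hn
    rcases Nat.even_or_odd n with ⟨m, rfl⟩ | ⟨m, rfl⟩
    · exfalso
      apply hn
      simp only [Function.mem_support] at *
      rw [chi_apply, if_pos (by omega)]
      norm_num
    · exact ⟨m, rfl⟩

/-- The prime 2 as an element of `Nat.Primes`. -/
def two : Nat.Primes := ⟨2, Nat.prime_two⟩

/-- The equivalence between primes `≡ 1 mod 4` as naturals and as `Nat.Primes`. -/
def equivS : {p : ℕ // p.Prime ∧ p % 4 = 1} ≃ {p : Nat.Primes // (p : ℕ) % 4 = 1} where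
  toFun p := ⟨⟨p.1, p.2.1⟩, p.2.2⟩
  invFun q := ⟨(q.1 : ℕ), q.1.2, q.2⟩
  left_inv p := rfl
  right_inv q := rfl

lemma summable_primes_z2 : Summable fun p : Nat.Primes => (((p : ℕ) : ℝ) ^ 2)⁻¹ :=
  summable_z2.comp_injective fun a b h => Subtype.ext h

lemma one_lt_sq (p : Nat.Primes) : (1 : ℝ) < ((p : ℕ) : ℝ) ^ 2 := by
  have : (2 : ℝ) ≤ ((p : ℕ) : ℝ) := by exact_mod_cast p.2.two_le
  nlinarith

lemma multipliable_m : Multipliable fun p : Nat.Primes => 1 + (((p : ℕ) : ℝ) ^ 2)⁻¹ := by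
  have hpos : ∀ (x : Unit) (p : Nat.Primes),
      0 < (fun p : Nat.Primes => fun _ : Unit => 1 + (((p : ℕ) : ℝ) ^ 2)⁻¹) p x := by
    intro _ p
    have := one_lt_sq p
    positivity
  have hlog : ∀ x : Unit, Summable fun p : Nat.Primes =>
      Real.log ((fun p : Nat.Primes => fun _ : Unit => 1 + (((p : ℕ) : ℝ) ^ 2)⁻¹) p x) := by
    intro _
    refine Summable.of_nonneg_of_le (fun p => Real.log_nonneg (by
      have := one_lt_sq p
      have : (0:ℝ) < ((p : ℕ) : ℝ) ^ 2 := by linarith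
      nlinarith [inv_nonneg.mpr this.le])) (fun p => ?_) summable_primes_z2
    have h0 : (0:ℝ) < 1 + (((p : ℕ) : ℝ) ^ 2)⁻¹ := by
      have := one_lt_sq p
      positivity
    calc Real.log (1 + (((p : ℕ) : ℝ) ^ 2)⁻¹)
        ≤ 1 + (((p : ℕ) : ℝ) ^ 2)⁻¹ - 1 := Real.log_le_sub_one_of_pos h0
      _ = (((p : ℕ) : ℝ) ^ 2)⁻¹ := by ring
  exact Real.multipliable_of_summable_log (hpos ()) (hlog ())

end CatalanAux

open CatalanAux in
/-- `∏_{p ≡ 1 (mod 4)} (p²+1)/(p²-1) = 12G/π²`. -/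
theorem prod_primes_one_mod_four :
    (∏' p : {p : ℕ // p.Prime ∧ p % 4 = 1},
        (((p : ℕ) : ℝ) ^ 2 + 1) / (((p : ℕ) : ℝ) ^ 2 - 1)) =
      12 * catalan' / Real.pi ^ 2 := by
  classical
  -- Euler products
  have E2 : HasProd (fun p : Nat.Primes => (1 - z2 (p : ℕ))⁻¹) (π ^ 2 / 6) := by
    have := EulerProduct.eulerProduct_completely_multiplicative_hasProd summable_norm_z2
    rwa [tsum_z2] at this
  have E4 : HasProd (fun p : Nat.Primes => (1 - z4 (p : ℕ))⁻¹) (π ^ 4 / 90) := by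
    have := EulerProduct.eulerProduct_completely_multiplicative_hasProd summable_norm_z4
    rwa [tsum_z4] at this
  have E3 : HasProd (fun p : Nat.Primes => (1 - chiz (p : ℕ))⁻¹) catalan' := by
    have := EulerProduct.eulerProduct_completely_multiplicative_hasProd summable_norm_chiz
    rwa [tsum_chiz] at this
  set m : Nat.Primes → ℝ := fun p => 1 + (((p : ℕ) : ℝ) ^ 2)⁻¹ with hm
  have hMul : Multipliable m := multipliable_m
  set B : ℝ := ∏' p, m p with hBdef
  have hBprod : HasProd m B := hMul.hasProd
  -- B * (π^4/90) = π^2/6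
  have key : B * (π ^ 4 / 90) = π ^ 2 / 6 := by
    have h1 : HasProd (fun p : Nat.Primes => m p * (1 - z4 (p : ℕ))⁻¹) (B * (π ^ 4 / 90)) :=
      hBprod.mul E4
    have h2 : (fun p : Nat.Primes => m p * (1 - z4 (p : ℕ))⁻¹)
        = fun p : Nat.Primes => (1 - z2 (p : ℕ))⁻¹ := by
      funext p
      have hx := one_lt_sq p
      have hx0 : ((p : ℕ) : ℝ) ^ 2 ≠ 0 := by positivity
      have hx1 : ((p : ℕ) : ℝ) ^ 2 - 1 ≠ 0 := by nlinarith
      have hq0 : ((p : ℕ) : ℝ) ≠ 0 := Nat.cast_ne_zero.mpr p.2.pos.ne'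
      have hx2 : 1 - (((p : ℕ) : ℝ) ^ 2)⁻¹ ≠ 0 := by
        have : (((p : ℕ) : ℝ) ^ 2)⁻¹ < 1 := by
          rw [inv_lt_one_iff₀]; right; exact hx
        intro hcon; nlinarith
      have hx2' : 1 + (((p : ℕ) : ℝ) ^ 2)⁻¹ ≠ 0 := by
        intro hcon
        have h0 : (0:ℝ) ≤ (((p : ℕ) : ℝ) ^ 2)⁻¹ := by positivity
        linarith
      simp only [hm, z2_apply, z4_apply]
      have hfact : 1 - (((p : ℕ) : ℝ) ^ 4)⁻¹
          = (1 - (((p : ℕ) : ℝ) ^ 2)⁻¹) * (1 + (((p : ℕ) : ℝ) ^ 2)⁻¹) := by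
        field_simp
        ring
      rw [hfact, mul_inv, mul_comm (1 - (((p : ℕ) : ℝ) ^ 2)⁻¹)⁻¹, ← mul_assoc,
        mul_inv_cancel₀ hx2', one_mul]
    rw [h2] at h1
    exact h1.unique E2
  -- Main product
  have hH : HasProd (fun p : Nat.Primes => m p * (1 - chiz (p : ℕ))⁻¹ *
      (if p = two then (4/5 : ℝ) else 1)) (B * catalan' * (4/5)) :=
    (hBprod.mul E3).mul (hasProd_ite_eq two (4/5 : ℝ))
  set s : Set Nat.Primes := {p | (p : ℕ) % 4 = 1} with hs
  set g : Nat.Primes → ℝ := fun p => (((p : ℕ) : ℝ) ^ 2 + 1) / (((p : ℕ) : ℝ) ^ 2 - 1) with hg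
  have hpt : (fun p : Nat.Primes => m p * (1 - chiz (p : ℕ))⁻¹ *
      (if p = two then (4/5 : ℝ) else 1)) = s.mulIndicator g := by
    funext p
    have hx := one_lt_sq p
    have hx0 : ((p : ℕ) : ℝ) ^ 2 ≠ 0 := by positivity
    have hx1 : ((p : ℕ) : ℝ) ^ 2 - 1 ≠ 0 := by nlinarith
    rw [Set.mulIndicator_apply]
    by_cases h2p : p = two
    · subst h2p
      have : ((two : Nat.Primes) : ℕ) = 2 := rfl
      rw [if_pos rfl, if_neg (by simp [hs, this])]
      simp only [hm, chiz_apply, this]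
      norm_num
    · have hodd : ((p : ℕ)) % 2 = 1 := by
        have := p.2.eq_one_or_self_of_dvd
        have hne : (p : ℕ) ≠ 2 := fun h => h2p (Subtype.ext h)
        rcases p.2.eq_two_or_odd with h | h
        · exact absurd h hne
        · exact h
      rw [if_neg h2p, mul_one]
      have h14 : (p : ℕ) % 4 = 1 ∨ (p : ℕ) % 4 = 3 := by omega
      rcases h14 with h14 | h14
      · rw [if_pos (by simpa [hs] using h14)]
        simp only [hm, chiz_apply, chi_apply, if_neg (by omega : ¬(p:ℕ) % 2 = 0), if_pos h14, hg]
        have hq0 : ((p : ℕ) : ℝ) ≠ 0 := Nat.cast_ne_zero.mpr p.2.pos.ne'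
        rw [← one_div (((p : ℕ) : ℝ) ^ 2), one_mul, one_sub_div hx0, one_add_div hx0, inv_div]
        field_simp
      · rw [if_neg (by simp [hs, h14])]
        simp only [hm, chiz_apply, chi_apply, if_neg (by omega : ¬(p:ℕ) % 2 = 0),
          if_neg (by omega : ¬(p:ℕ) % 4 = 1)]
        have hpos : (0:ℝ) < 1 + (((p : ℕ) : ℝ) ^ 2)⁻¹ := by positivity
        rw [neg_one_mul, sub_neg_eq_add]
        exact mul_inv_cancel₀ (ne_of_gt hpos)
  rw [hpt] at hH
  have hsub : HasProd (fun p : ↥s => g p) (B * catalan' * (4/5)) :=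
    hasProd_subtype_iff_mulIndicator.mpr hH
  -- transfer to the subtype in the statement
  have hsub' : HasProd (fun p : {p : Nat.Primes // (p : ℕ) % 4 = 1} => g p)
      (B * catalan' * (4/5)) := hsub
  have := equivS.tprod_eq (fun p : {p : Nat.Primes // (p : ℕ) % 4 = 1} => g p)
  rw [hsub'.tprod_eq] at this
  have hgoal : (∏' p : {p : ℕ // p.Prime ∧ p % 4 = 1},
      (((p : ℕ) : ℝ) ^ 2 + 1) / (((p : ℕ) : ℝ) ^ 2 - 1)) = B * catalan' * (4/5) := by
    rw [← this]
    exact tprod_congr fun p => by rw [hg]; rfl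
  rw [hgoal]
  -- finish numerically
  have hπ : π ≠ 0 := Real.pi_ne_zero
  have hB : B = 15 / π ^ 2 := by
    have hne : (π : ℝ) ^ 4 / 90 ≠ 0 := by positivity
    have hBeq : B = (π ^ 2 / 6) / (π ^ 4 / 90) := by
      rw [eq_div_iff hne]; exact key
    rw [hBeq]
    field_simp
    ring
  rw [hB]
  field_simp
  ring
end
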